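/- Let 𝒯 be a teacher class over (X,Y,Φ), let H be a nonempty history consistent with 𝒯, and let N be the number of labels in Y that do not appear in any pair of H. Then Ldim(DtO(𝒯,H)) ≥ DFFdim(𝒯,H) − N. -/

import Mathlib

open scoped Classical

/-- A teacher over examples `X`, labels `Y` and Boolean features `Φ`:
a labeling function together with a feature-feedback function that, whenever
two examples receive different labels, returns a feature of `Φ` satisfied by
the first example and not by the second. -/
structure Teacher (X Y : Type) (Φ : Set (X → Bool)) where
  label : X → Y
  feedback : X → X → Option (X → Bool)
  feedback_spec : ∀ x xh : X, label x ≠ label xh →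
    ∃ φ ∈ Φ, feedback x xh = some φ ∧ φ x = true ∧ φ xh = false

/-- A teacher is consistent with a history `H` of labeled examples. -/
def ConsistentH {X Y : Type} {Φ : Set (X → Bool)} (T : Teacher X Y Φ)
    (H : Set (X × Y)) : Prop :=
  ∀ p ∈ H, T.label p.1 = p.2

/-- Restriction of a teacher class by one round of DFF interaction: the
teachers that label `x` with `y` and give feature feedback `φ` on `(x, xh)`. -/
def TRestrict {X Y : Type} {Φ : Set (X → Bool)} (𝒯 : Set (Teacher X Y Φ))
    (x xh : X) (y : Y) (φ : X → Bool) : Set (Teacher X Y Φ) :=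
  {T | T ∈ 𝒯 ∧ T.label x = y ∧ T.feedback x xh = some φ}

/-- `ShatteredDFFT Φ 𝒯 H d` holds iff there is a DFF tree of height `d`
shattered by the teacher class `𝒯` and the history `H`: at a leaf, some
teacher of the current class is consistent with the accumulated history
(i.e. every root-to-leaf path of the tree is consistent with some teacher of
the original class that is consistent with the original history); at an inner
node a next example `x` is presented, and for every available explanation
pair `(xh, yh)` (an element of the history or a labeled example revealed
along the path, all of which are accumulated in `H`) there is teacher
feedback `(y, φ)` with `y ≠ yh` and `φ ∈ Φ` leading to a shattered subtree of
height `d` for the correspondingly restricted class and extended history. -/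
inductive ShatteredDFFT {X Y : Type} (Φ : Set (X → Bool)) :
    Set (Teacher X Y Φ) → Set (X × Y) → ℕ → Prop
  | leaf (𝒯 : Set (Teacher X Y Φ)) (H : Set (X × Y))
      (h : ∃ T ∈ 𝒯, ConsistentH T H) : ShatteredDFFT Φ 𝒯 H 0
  | node (𝒯 : Set (Teacher X Y Φ)) (H : Set (X × Y)) (d : ℕ) (x : X)
      (y : X × Y → Y) (φ : X × Y → (X → Bool))
      (hne : ∀ p ∈ H, y p ≠ p.2) (hΦ : ∀ p ∈ H, φ p ∈ Φ)
      (h : ∀ p ∈ H,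
        ShatteredDFFT Φ (TRestrict 𝒯 x p.1 (y p) (φ p)) (insert (x, y p) H) d) :
      ShatteredDFFT Φ 𝒯 H (d + 1)

/-- The DFF dimension of a teacher class `𝒯` with history `H`: the maximal
height of a DFF tree shattered by `𝒯` and `H` (possibly infinite). -/
noncomputable def DFFdim {X Y : Type} (Φ : Set (X → Bool))
    (𝒯 : Set (Teacher X Y Φ)) (H : Set (X × Y)) : ℕ∞ :=
  sSup {d : ℕ∞ | ∃ n : ℕ, d = n ∧ ShatteredDFFT Φ 𝒯 H n}

/-- The indicator feature of a single element. -/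
noncomputable def indF {Z : Type} (w : Z) : Z → Bool :=
  fun z => decide (z = w)

/-- The feature set of the mapping `OtD`: all singleton indicator features on
`X ⊕ Y` (the example domain `X` enlarged by a fresh example `⋆_y = inr y`
for every label `y`). -/
noncomputable def OtDPhi (X Y : Type) : Set ((X ⊕ Y) → Bool) :=
  {φ | ∃ w : X ⊕ Y, φ = indF w}

/-- The history of the mapping `OtD`: each fresh example `⋆_y` labeled `y`. -/
def OtDHist (X Y : Type) : Set ((X ⊕ Y) × Y) :=
  {p | ∃ y : Y, p = (Sum.inr y, y)}

/-- The teacher class of the mapping `OtD` applied to a hypothesis class `F`: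
for `f ∈ F`, the teacher labels by the extension of `f` sending `⋆_y` to `y`,
and its feature feedback on `(x, x')` is the indicator of `x`. -/
noncomputable def OtDClass {X Y : Type} (F : Set (X → Y)) :
    Set (Teacher (X ⊕ Y) Y (OtDPhi X Y)) :=
  {T | ∃ f ∈ F, T.label = Sum.elim f id ∧
    T.feedback = fun x _ => some (indF x)}

/-- The examples appearing in a history. -/
def HistX {X Y : Type} (H : Set (X × Y)) : Set X := {x | ∃ y : Y, (x, y) ∈ H}

/-- The mapping `DtO` from DFF to Online Learning: the class of restrictions
of the labeling functions of `𝒯` to the examples not appearing in `H`. -/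
def DtO {X Y : Type} {Φ : Set (X → Bool)} (𝒯 : Set (Teacher X Y Φ))
    (H : Set (X × Y)) : Set ((((HistX H)ᶜ : Set X)) → Y) :=
  {g | ∃ T ∈ 𝒯, g = fun x => T.label x.1}

/-- `LShat F n` holds iff there is a Littlestone tree of height `n` shattered
by the hypothesis class `F`: a complete binary tree with examples at internal
nodes, two distinct labels on the outgoing edges of each internal node, and
every root-to-leaf path realized by some hypothesis of `F`. -/
inductive LShat {X Y : Type} : Set (X → Y) → ℕ → Prop
  | leaf (F : Set (X → Y)) (h : F.Nonempty) : LShat F 0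
  | node (F : Set (X → Y)) (n : ℕ) (x : X) (y₁ y₂ : Y) (hne : y₁ ≠ y₂)
      (h₁ : LShat {f ∈ F | f x = y₁} n) (h₂ : LShat {f ∈ F | f x = y₂} n) :
      LShat F (n + 1)

/-- The (multiclass) Littlestone dimension of a hypothesis class: the maximal
height of a Littlestone tree for it (possibly infinite). -/
noncomputable def Ldim {X Y : Type} (F : Set (X → Y)) : ℕ∞ :=
  sSup {d : ℕ∞ | ∃ n : ℕ, d = n ∧ LShat F n}

/-- `F` admits an infinite-depth Littlestone tree: a binary branching
assignment of examples and pairs of distinct labels to finite binary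
sequences such that every finite branch is consistent with some hypothesis
of `F`. -/
def InfLTree {X Y : Type} (F : Set (X → Y)) : Prop :=
  ∃ (x : List Bool → X) (y : List Bool → Bool → Y),
    (∀ s : List Bool, y s false ≠ y s true) ∧
    ∀ b : List Bool, ∃ f ∈ F,
      ∀ (s : List Bool) (c : Bool), (s ++ [c]) <+: b → f (x s) = y s c

/-- Auxiliary: a shattered class with nonempty history has a consistent teacher. -/
lemma exists_consistent_of_shattered {X Y : Type} {Φ : Set (X → Bool)}
    {𝒯' : Set (Teacher X Y Φ)} {H' : Set (X × Y)} {d : ℕ}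
    (h : ShatteredDFFT Φ 𝒯' H' d) (hne : H'.Nonempty) :
    ∃ T ∈ 𝒯', ConsistentH T H' := by
  induction h with
  | leaf 𝒯' H' h => exact h
  | node 𝒯' H' d x y φ hney hΦ h ih =>
    obtain ⟨p, hp⟩ := hne
    obtain ⟨T, hT, hTc⟩ := ih p hp ⟨(x, y p), Set.mem_insert _ _⟩
    exact ⟨T, hT.1, fun q hq => hTc q (Set.mem_insert_of_mem _ hq)⟩

/-- Auxiliary: `LShat` gives a nonempty class. -/
lemma LShat_nonempty {X Y : Type} {F : Set (X → Y)} {n : ℕ}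
    (h : LShat F n) : F.Nonempty := by
  induction h with
  | leaf F h => exact h
  | node F n x y₁ y₂ hne h₁ h₂ ih₁ ih₂ => exact ⟨ih₁.choose, ih₁.choose_spec.1⟩

/-- Auxiliary: `LShat` is monotone in the class. -/
lemma LShat_mono {X Y : Type} {F F' : Set (X → Y)} {n : ℕ}
    (h : LShat F n) (hFF : F ⊆ F') : LShat F' n := by
  induction h generalizing F' with
  | leaf F h => exact .leaf _ (h.mono hFF)
  | node F n x y₁ y₂ hne h₁ h₂ ih₁ ih₂ =>
    exact .node F' n x y₁ y₂ hne
      (ih₁ fun f hf => ⟨hFF hf.1, hf.2⟩) (ih₂ fun f hf => ⟨hFF hf.1, hf.2⟩)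

/-- Auxiliary: `LShat` is antitone in the height. -/
lemma LShat_le {X Y : Type} {F : Set (X → Y)} {n : ℕ}
    (h : LShat F n) : ∀ m ≤ n, LShat F m := by
  induction h with
  | leaf F h => intro m hm; exact Nat.le_zero.mp hm ▸ .leaf F h
  | node F n x y₁ y₂ hne h₁ h₂ ih₁ ih₂ =>
    intro m hm
    match m with
    | 0 =>
      obtain ⟨f, hf⟩ := LShat_nonempty h₁
      exact .leaf F ⟨f, hf.1⟩
    | Nat.succ k =>
      exact .node F k x y₁ y₂ hne (ih₁ k (Nat.succ_le_succ_iff.mp hm))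
        (ih₂ k (Nat.succ_le_succ_iff.mp hm))

/-- The consistent restrictions of a teacher subclass. -/
def Gset {X Y : Type} (H : Set (X × Y)) {Φ : Set (X → Bool)}
    (𝒯' : Set (Teacher X Y Φ)) (H' : Set (X × Y)) :
    Set ((((HistX H)ᶜ : Set X)) → Y) :=
  {g | ∃ T ∈ 𝒯', ConsistentH T H' ∧ g = fun x => T.label x.1}

/-- The number of labels missing from a history. -/
noncomputable def missN {X Y : Type} [Fintype Y] (H' : Set (X × Y)) : ℕ :=
  (Finset.univ.filter fun y : Y => ∀ x : X, (x, y) ∉ H').card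

lemma missN_mono {X Y : Type} [Fintype Y] {H₁ H₂ : Set (X × Y)}
    (h : H₁ ⊆ H₂) : missN H₂ ≤ missN H₁ := by
  apply Finset.card_le_card
  intro y hy
  simp only [Finset.mem_filter, Finset.mem_univ, true_and] at hy ⊢
  exact fun x hx => hy x (h hx)

/-- Main induction: a shattered DFF tree of height `d` over a class/history
extending `(𝒯, H)` yields a Littlestone tree of height `d - missN H'`. -/
lemma main_lemma {X Y : Type} [Fintype Y] {Φ : Set (X → Bool)}
    {H : Set (X × Y)} (hH : H.Nonempty) :
    ∀ {𝒯' : Set (Teacher X Y Φ)} {H' : Set (X × Y)} {d : ℕ},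
      ShatteredDFFT Φ 𝒯' H' d → H ⊆ H' →
      LShat (Gset H 𝒯' H') (d - missN H') := by
  intro 𝒯' H' d h
  induction h with
  | leaf 𝒯' H' h =>
    intro _
    obtain ⟨T, hT, hTc⟩ := h
    rw [Nat.zero_sub]
    exact .leaf _ ⟨fun x => T.label x.1, T, hT, hTc, rfl⟩
  | node 𝒯' H' d x y φ hney hΦ h ih =>
    intro hsub
    have hH' : H'.Nonempty := hH.mono hsub
    -- the example `x` does not appear in `H'`
    have hxH' : x ∉ HistX H' := by
      rintro ⟨yh, hyh⟩
      obtain ⟨T, hT, hTc⟩ := exists_consistent_of_shattered (h (x, yh) hyh)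
        ⟨(x, y (x, yh)), Set.mem_insert _ _⟩
      have h1 : T.label x = y (x, yh) := hTc (x, y (x, yh)) (Set.mem_insert _ _)
      have h2 : T.label x = yh := hTc (x, yh) (Set.mem_insert_of_mem _ hyh)
      exact hney (x, yh) hyh (h1 ▸ h2)
    have hxH : x ∉ HistX H := fun ⟨yh, hyh⟩ => hxH' ⟨yh, hsub hyh⟩
    by_cases hcase : ∃ p ∈ H', ∃ q ∈ H', y p ≠ y q
    · -- two distinct responses: binary Littlestone branching at `x`
      obtain ⟨p, hp, q, hq, hpq⟩ := hcase
      have key : ∀ r ∈ H',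
          LShat {f ∈ Gset H 𝒯' H' | f ⟨x, hxH⟩ = y r} (d - missN H') := by
        intro r hr
        have hsub' : Gset H (TRestrict 𝒯' x r.1 (y r) (φ r)) (insert (x, y r) H')
            ⊆ {f ∈ Gset H 𝒯' H' | f ⟨x, hxH⟩ = y r} := by
          rintro g ⟨T, ⟨hT𝒯, hlab, hfb⟩, hTc, rfl⟩
          exact ⟨⟨T, hT𝒯, fun s hs => hTc s (Set.mem_insert_of_mem _ hs), rfl⟩, hlab⟩
        have hm : missN (insert (x, y r) H') ≤ missN H' :=
          missN_mono (Set.subset_insert _ _)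
        exact LShat_le
          (LShat_mono (ih r hr (hsub.trans (Set.subset_insert _ _))) hsub')
          _ (by omega)
      refine LShat_le (.node _ (d - missN H') ⟨x, hxH⟩ (y p) (y q) hpq
        (key p hp) (key q hq)) _ (by omega)
    · -- all responses equal a label missing from `H'`
      push_neg at hcase
      obtain ⟨p0, hp0⟩ := hH'
      have hmiss : ∀ x0 : X, (x0, y p0) ∉ H' := by
        intro x0 hx0
        exact hney (x0, y p0) hx0 (hcase (x0, y p0) hx0 p0 hp0)
      have hlt : missN (insert (x, y p0) H') < missN H' := by
        apply Finset.card_lt_card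
        rw [Finset.ssubset_iff_of_subset]
        · refine ⟨y p0, ?_, ?_⟩
          · simp only [Finset.mem_filter, Finset.mem_univ, true_and]
            exact hmiss
          · simp only [Finset.mem_filter, Finset.mem_univ, true_and, not_forall,
              not_not]
            exact ⟨x, Set.mem_insert _ _⟩
        · intro z hz
          simp only [Finset.mem_filter, Finset.mem_univ, true_and] at hz ⊢
          exact fun x0 hx0 => hz x0 (Set.mem_insert_of_mem _ hx0)
      have hsub' : Gset H (TRestrict 𝒯' x p0.1 (y p0) (φ p0))
          (insert (x, y p0) H') ⊆ Gset H 𝒯' H' := by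
        rintro g ⟨T, ⟨hT𝒯, hlab, hfb⟩, hTc, rfl⟩
        exact ⟨T, hT𝒯, fun s hs => hTc s (Set.mem_insert_of_mem _ hs), rfl⟩
      exact LShat_le
        (LShat_mono (ih p0 hp0 (hsub.trans (Set.subset_insert _ _))) hsub')
        _ (by omega)

/-- **Lemma (lower bound on the Littlestone dimension of `DtO`).** Let `𝒯`
be a teacher class over `(X, Y, Φ)` with `Y` a finite label set, let `H` be
a nonempty history consistent with `𝒯`, and let `N` be the number of labels
of `Y` that do not appear in any pair of `H`.  Then
`Ldim(DtO(𝒯, H)) ≥ DFFdim(𝒯, H) − N`. -/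
theorem Ldim_DtO_ge_DFFdim_sub {X Y : Type} [Fintype Y] (Φ : Set (X → Bool))
    (𝒯 : Set (Teacher X Y Φ)) (H : Set (X × Y)) (hH : H.Nonempty)
    (hcons : ∃ T ∈ 𝒯, ConsistentH T H) :
    DFFdim Φ 𝒯 H -
        ((Finset.univ.filter fun y : Y => ∀ x : X, (x, y) ∉ H).card : ℕ∞) ≤
      Ldim (DtO 𝒯 H) := by
  set N : ℕ := (Finset.univ.filter fun y : Y => ∀ x : X, (x, y) ∉ H).card with hN
  rw [tsub_le_iff_right]
  apply sSup_le
  rintro d ⟨n, rfl, hn⟩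
  have hmain : LShat (Gset H 𝒯 H) (n - missN H) :=
    main_lemma hH hn (Set.Subset.refl H)
  have hsubset : Gset H 𝒯 H ⊆ DtO 𝒯 H := by
    rintro g ⟨T, hT, _, rfl⟩
    exact ⟨T, hT, rfl⟩
  have hshat : LShat (DtO 𝒯 H) (n - N) := LShat_mono hmain hsubset
  have hle : ((n - N : ℕ) : ℕ∞) ≤ Ldim (DtO 𝒯 H) :=
    le_sSup ⟨n - N, rfl, hshat⟩
  calc (n : ℕ∞) ≤ ((n - N + N : ℕ) : ℕ∞) := by
        exact_mod_cast le_tsub_add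
    _ = ((n - N : ℕ) : ℕ∞) + (N : ℕ∞) := by push_cast; ring
    _ ≤ Ldim (DtO 𝒯 H) + (N : ℕ∞) := add_le_add_left hle _
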